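/- For n ≥ 3, the number of 132-avoiding permutations of length n with exactly one match of MMP(1,0,0,1) equals (n-1)(n-2). -/

import Mathlib

open Finset

/-- σ avoids the classical pattern 132. -/
def avoids132 {n : ℕ} (σ : Equiv.Perm (Fin n)) : Prop :=
  ¬ ∃ i j k : Fin n, i < j ∧ j < k ∧ σ i < σ k ∧ σ k < σ j

/-- position `i` matches the quadrant marked mesh pattern MMP(a,b,c,d) in σ. -/
def mmpMatch {n : ℕ} (a b c d : ℕ) (σ : Equiv.Perm (Fin n)) (i : Fin n) : Prop :=
  a ≤ (Finset.univ.filter fun j => i < j ∧ σ i < σ j).card ∧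
  b ≤ (Finset.univ.filter fun j => j < i ∧ σ i < σ j).card ∧
  c ≤ (Finset.univ.filter fun j => j < i ∧ σ j < σ i).card ∧
  d ≤ (Finset.univ.filter fun j => i < j ∧ σ j < σ i).card

/-- the number of positions of σ matching MMP(a,b,c,d). -/
noncomputable def mmp {n : ℕ} (a b c d : ℕ) (σ : Equiv.Perm (Fin n)) : ℕ :=
  Nat.card {i : Fin n // mmpMatch a b c d σ i}

namespace Stmt15Aux

/-- Simple form of the MMP(1,0,0,1) match condition. -/
def Mat {n : ℕ} (σ : Equiv.Perm (Fin n)) (i : Fin n) : Prop :=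
  (∃ j, i < j ∧ σ i < σ j) ∧ (∃ j, i < j ∧ σ j < σ i)

lemma mmpMatch_iff {n : ℕ} (σ : Equiv.Perm (Fin n)) (i : Fin n) :
    mmpMatch 1 0 0 1 σ i ↔ Mat σ i := by
  unfold mmpMatch Mat
  simp [Nat.succ_le_iff, Finset.card_pos, Finset.filter_nonempty_iff]

lemma mmp_one_iff {n : ℕ} (σ : Equiv.Perm (Fin n)) :
    mmp 1 0 0 1 σ = 1 ↔ ∃! i, Mat σ i := by
  rw [mmp, Nat.card_eq_one_iff_unique]
  constructor
  · rintro ⟨hs, ⟨i, hi⟩⟩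
    refine ⟨i, (mmpMatch_iff σ i).1 hi, fun j hj => ?_⟩
    have := hs.allEq ⟨j, (mmpMatch_iff σ j).2 hj⟩ ⟨i, hi⟩
    exact congrArg Subtype.val this
  · rintro ⟨i, hi, hu⟩
    refine ⟨⟨fun a b => ?_⟩, ⟨⟨i, (mmpMatch_iff σ i).2 hi⟩⟩⟩
    have ha := hu _ ((mmpMatch_iff σ a).1 a.2)
    have hb := hu _ ((mmpMatch_iff σ b).1 b.2)
    exact Subtype.ext (ha.trans hb.symm)

/-- the explicit family of permutations (as a function on values). -/
def g (n p q i : ℕ) : ℕ :=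
  if p < q then
    if i < p then n - 1 - i
    else if i = p then q - p
    else if i ≤ q then i - p - 1
    else i - p
  else
    if i = q then n - q - 2
    else if i = q + 1 then n - q - 1
    else if i ≤ p then n - 1 - i
    else i - p - 1

def Ok (n p q : ℕ) : Prop := p < n - 1 ∧ q < n - 1 ∧ p ≠ q

lemma g_lt {n p q : ℕ} (h : Ok n p q) {i : ℕ} (hi : i < n) : g n p q i < n := by
  obtain ⟨hp, hq, hpq⟩ := h
  unfold g; split_ifs <;> omega

def phi (n p q : ℕ) : Fin n → Fin n :=
  fun i => ⟨g n p q i % n, Nat.mod_lt _ i.pos⟩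

lemma phi_val {n p q : ℕ} (h : Ok n p q) (i : Fin n) :
    (phi n p q i).val = g n p q i.val :=
  Nat.mod_eq_of_lt (g_lt h i.isLt)

lemma phi_inj {n p q : ℕ} (h : Ok n p q) : Function.Injective (phi n p q) := by
  intro a b hab
  have hv := congrArg Fin.val hab
  rw [phi_val h, phi_val h] at hv
  obtain ⟨hp, hq, hpq⟩ := h
  have ha := a.isLt; have hb := b.isLt
  ext
  unfold g at hv; split_ifs at hv <;> omega

/-- the member of the family as a permutation. -/
noncomputable def Phi {n p q : ℕ} (h : Ok n p q) : Equiv.Perm (Fin n) :=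
  Equiv.ofBijective _ (Finite.injective_iff_bijective.1 (phi_inj h))

lemma Phi_val {n p q : ℕ} (h : Ok n p q) (i : Fin n) :
    (Phi h i).val = g n p q i.val := phi_val h i

namespace Stmt15Aux

lemma Phi_avoids {n p q : ℕ} (h : Ok n p q) : avoids132 (Phi h) := by
  rintro ⟨i, j, k, hij, hjk, h1, h2⟩
  rw [Fin.lt_def] at hij hjk h1 h2
  simp only [Phi_val h] at h1 h2
  obtain ⟨hp, hq, hpq⟩ := id h
  have hi := i.isLt; have hj := j.isLt; have hk := k.isLt
  unfold g at h1 h2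
  split_ifs at h1 h2 <;> omega

lemma Phi_mat_A {n p q : ℕ} (h : Ok n p q) (hpq : p < q) : ∃! i, Mat (Phi h) i := by
  obtain ⟨hp, hq, -⟩ := id h
  have hn : 2 ≤ n := by omega
  refine ⟨⟨p, by omega⟩, ⟨⟨⟨n-1, by omega⟩, ?_, ?_⟩, ⟨⟨p+1, by omega⟩, ?_, ?_⟩⟩, ?_⟩
  · rw [Fin.mk_lt_mk]; omega
  · rw [Fin.lt_def]; simp only [Phi_val h]; unfold g; split_ifs <;> omega
  · rw [Fin.mk_lt_mk]; omega
  · rw [Fin.lt_def]; simp only [Phi_val h]; unfold g; split_ifs <;> omega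
  · rintro y ⟨⟨a, hya, ha⟩, ⟨b, hyb, hb⟩⟩
    rw [Fin.lt_def] at hya hyb ha hb
    simp only [Phi_val h] at ha hb
    have hy := y.isLt; have ha' := a.isLt; have hb' := b.isLt
    ext
    rcases lt_trichotomy y.val p with hc | hc | hc
    · exfalso; unfold g at ha; split_ifs at ha <;> omega
    · exact hc
    · exfalso; unfold g at hb; split_ifs at hb <;> omega

lemma Phi_mat_C {n p q : ℕ} (h : Ok n p q) (hqp : q < p) : ∃! i, Mat (Phi h) i := by
  obtain ⟨hp, hq, -⟩ := id h
  have hn : 2 ≤ n := by omega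
  refine ⟨⟨q, by omega⟩, ⟨⟨⟨q+1, by omega⟩, ?_, ?_⟩, ⟨⟨n-1, by omega⟩, ?_, ?_⟩⟩, ?_⟩
  · rw [Fin.mk_lt_mk]; omega
  · rw [Fin.lt_def]; simp only [Phi_val h]; unfold g; split_ifs <;> omega
  · rw [Fin.mk_lt_mk]; omega
  · rw [Fin.lt_def]; simp only [Phi_val h]; unfold g; split_ifs <;> omega
  · rintro y ⟨⟨a, hya, ha⟩, ⟨b, hyb, hb⟩⟩
    rw [Fin.lt_def] at hya hyb ha hb
    simp only [Phi_val h] at ha hb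
    have hy := y.isLt; have ha' := a.isLt; have hb' := b.isLt
    ext
    rcases lt_trichotomy y.val q with hc | hc | hc
    · exfalso; unfold g at ha; split_ifs at ha <;> omega
    · exact hc
    · rcases le_or_gt y.val p with hc2 | hc2
      · exfalso; unfold g at ha; split_ifs at ha <;> omega
      · exfalso; unfold g at hb; split_ifs at hb <;> omega

end Stmt15Aux
namespace Stmt15Aux

set_option maxHeartbeats 1600000 in
lemma Phi_param_inj {n p q p' q' : ℕ} (h : Ok n p q) (h' : Ok n p' q')
    (he : Phi h = Phi h') : p = p' ∧ q = q' := by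
  have e : ∀ i : ℕ, (hi : i < n) → g n p q i = g n p' q' i := by
    intro i hi
    have h2 := congrArg (fun σ : Equiv.Perm (Fin n) => (σ ⟨i, hi⟩).val) he
    simpa only [Phi_val h, Phi_val h'] using h2
  obtain ⟨hp, hq, hpq⟩ := id h
  obtain ⟨hp', hq', hpq'⟩ := id h'
  have hpp : p = p' := by
    have e1 := e (p+1) (by omega)
    unfold g at e1
    split_ifs at e1 <;> omega
  subst hpp
  refine ⟨rfl, ?_⟩
  rcases lt_or_gt_of_ne hpq with hA | hC
  · have e3 := e p (by omega)
    unfold g at e3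
    split_ifs at e3 <;> omega
  · rcases lt_or_gt_of_ne hpq' with hA' | hC'
    · have e3 := e p (by omega)
      unfold g at e3
      split_ifs at e3 <;> omega
    · have eq1 := e q (by omega)
      unfold g at eq1
      split_ifs at eq1 <;> omega

lemma card_lt_eq {n : ℕ} (σ : Equiv.Perm (Fin n)) (i : Fin n) :
    (univ.filter fun x => σ x < σ i).card = (σ i).val := by
  rw [← Fin.card_Iio (σ i)]
  apply Finset.card_bij (fun x _ => σ x)
  · intro a ha; simp only [mem_filter, mem_univ, true_and] at ha
    simpa [Finset.mem_Iio] using ha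
  · intro a _ b _ hab; exact σ.injective hab
  · intro b hb
    refine ⟨σ.symm b, ?_, by simp⟩
    simp only [mem_filter, mem_univ, true_and, Equiv.apply_symm_apply]
    simpa [Finset.mem_Iio] using hb

lemma card_gt_eq {n : ℕ} (σ : Equiv.Perm (Fin n)) (i : Fin n) :
    (univ.filter fun x => σ i < σ x).card = n - 1 - (σ i).val := by
  rw [← Fin.card_Ioi (σ i)]
  apply Finset.card_bij (fun x _ => σ x)
  · intro a ha; simp only [mem_filter, mem_univ, true_and] at ha
    simpa [Finset.mem_Ioi] using ha
  · intro a _ b _ hab; exact σ.injective hab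
  · intro b hb
    refine ⟨σ.symm b, ?_, by simp⟩
    simp only [mem_filter, mem_univ, true_and, Equiv.apply_symm_apply]
    simpa [Finset.mem_Ioi] using hb

lemma val_eq_of_gtset {n : ℕ} (σ : Equiv.Perm (Fin n)) (i b : Fin n)
    (h : ∀ x, σ i < σ x ↔ x < b) : (σ i).val = n - 1 - b.val := by
  have h1 := card_gt_eq σ i
  have h2 : (univ.filter fun x => σ i < σ x) = Finset.Iio b := by
    ext x; simp [h x, Finset.mem_Iio]
  rw [h2, Fin.card_Iio] at h1
  have h3 := (σ i).isLt
  have h4 := b.isLt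
  omega

lemma val_eq_of_ltset {n : ℕ} (σ : Equiv.Perm (Fin n)) (i : Fin n) (s : Finset (Fin n))
    (h : ∀ x, σ x < σ i ↔ x ∈ s) : (σ i).val = s.card := by
  rw [← card_lt_eq σ i]
  congr 1
  ext x; simp [h x]

lemma surj_param {n : ℕ} (hn : 3 ≤ n) (σ : Equiv.Perm (Fin n)) (hav : avoids132 σ)
    (hm : ∃! i, Mat σ i) : ∃ p q, ∃ h : Ok n p q, Phi h = σ := by
  obtain ⟨P, hPmat, huniq⟩ := hm
  obtain ⟨⟨A, hPA, hA⟩, ⟨B, hPB, hB⟩⟩ := hPmat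
  have neval : ∀ i j : Fin n, i < j → σ i ≠ σ j := fun i j hij he => (ne_of_lt hij) (σ.injective he)
  have hnm : ∀ i : Fin n, i ≠ P → (∀ j, i < j → σ j < σ i) ∨ (∀ j, i < j → σ i < σ j) := by
    intro i hi
    by_cases h1 : ∃ j, i < j ∧ σ i < σ j
    · right
      intro j hj
      by_contra hc
      have h2 : σ j < σ i := lt_of_le_of_ne (not_lt.1 hc) (neval i j hj).symm
      exact hi (huniq i ⟨h1, ⟨j, hj, h2⟩⟩)
    · left
      push_neg at h1
      intro j hj
      exact lt_of_le_of_ne (h1 j hj) (neval i j hj).symm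
  have hmono : ∀ i : Fin n, (∀ j, i < j → σ i < σ j) → ∀ j k : Fin n, i < j → j < k → σ j < σ k := by
    intro i hmin j k hij hjk
    by_contra hc
    exact hav ⟨i, j, k, hij, hjk, hmin k (hij.trans hjk),
      lt_of_le_of_ne (not_lt.1 hc) (neval j k hjk).symm⟩
  have hpre : ∀ i : Fin n, i < P → ∀ j, i < j → σ j < σ i := by
    intro i hiP
    rcases hnm i (ne_of_lt hiP) with hh | hh
    · exact hh
    · exact absurd (hmono i hh P B hiP hPB) (asymm hB)
  have hpreval : ∀ i : Fin n, i < P → (σ i).val = n - 1 - i.val := by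
    intro i hiP
    apply val_eq_of_gtset σ i i
    intro x
    constructor
    · intro hx
      by_contra hc
      rcases eq_or_lt_of_le (not_lt.1 hc) with he | hlt
      · exact lt_irrefl _ (he ▸ hx)
      · exact absurd (hpre i hiP x hlt) (asymm hx)
    · intro hx
      exact hpre x (hx.trans hiP) i hx
  have hPB' := Fin.lt_def.1 hPB
  have hBn := B.isLt
  have hP1n : P.val + 1 < n := by omega
  obtain ⟨P1, hP1⟩ : ∃ P1 : Fin n, P1.val = P.val + 1 := ⟨⟨P.val + 1, hP1n⟩, rfl⟩
  have hPP1 : P < P1 := by rw [Fin.lt_def]; omega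
  have hBv := Fin.lt_def.1 hB
  have hAv := Fin.lt_def.1 hA
  rcases hnm P1 (by intro he; rw [he] at hP1; omega) with hmax | hmin
  case inl =>
    have hP1A : P1 ≤ A := by rw [Fin.le_def]; have := Fin.lt_def.1 hPA; omega
    have h1 : σ P < σ P1 := by
      rcases eq_or_lt_of_le hP1A with he | hlt
      · rw [he]; exact hA
      · exact hA.trans (hmax A hlt)
    have h1v := Fin.lt_def.1 h1
    have hP1val : (σ P1).val = n - 1 - P.val := by
      have hg := val_eq_of_gtset σ P1 P ?_
      · rw [hg]
      intro x
      constructor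
      · intro hx
        by_contra hc
        push_neg at hc
        rcases eq_or_lt_of_le hc with he | hlt
        · exact absurd (he ▸ hx) (asymm h1)
        · have hx1 : P1 ≤ x := by rw [Fin.le_def]; rw [Fin.lt_def] at hlt; omega
          rcases eq_or_lt_of_le hx1 with he2 | hlt2
          · exact lt_irrefl _ (he2 ▸ hx)
          · exact absurd (hmax x hlt2) (asymm hx)
      · intro hx
        exact hpre x hx P1 (hx.trans hPP1)
    have hPn2 : P.val ≤ n - 2 := by omega
    have hPval : (σ P).val = n - P.val - 2 := by
      by_contra hc
      have hvlt2 : (σ P).val < n - P.val - 2 := by omega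
      obtain ⟨x, hx⟩ : ∃ x : Fin n, σ x = ⟨n - P.val - 2, by omega⟩ :=
        ⟨σ.symm _, σ.apply_symm_apply _⟩
      have hxv : (σ x).val = n - P.val - 2 := by rw [hx]
      have hxP1 : P1 < x := by
        rw [Fin.lt_def]
        by_contra hcc
        push_neg at hcc
        rcases lt_trichotomy x.val P.val with hd | hd | hd
        · have := hpreval x (Fin.lt_def.2 hd); omega
        · have hxe : x = P := Fin.val_injective hd
          rw [hxe] at hxv; omega
        · have hxe : x = P1 := Fin.val_injective (by omega)
          rw [hxe] at hxv; omega
      exact hav ⟨P, P1, x, hPP1, hxP1, Fin.lt_def.2 (by omega),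
        Fin.lt_def.2 (by omega)⟩
    have hPn3 : P.val + 3 ≤ n := by omega
    obtain ⟨K, hKσ⟩ : ∃ K : Fin n, σ K = ⟨0, by omega⟩ :=
      ⟨σ.symm _, σ.apply_symm_apply _⟩
    have hKv : (σ K).val = 0 := by rw [hKσ]
    have hKn := K.isLt
    have hKval : P.val + 1 < K.val := by
      by_contra hc
      push_neg at hc
      rcases lt_trichotomy K.val P.val with hd | hd | hd
      · have := hpreval K (Fin.lt_def.2 hd); omega
      · have hxe : K = P := Fin.val_injective hd
        rw [hxe] at hKv; omega
      · have hxe : K = P1 := Fin.val_injective (by omega)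
        rw [hxe] at hKv; omega
    have hKmin : ∀ j, K < j → σ K < σ j := by
      intro j hj
      rw [Fin.lt_def, hKv]
      have hj0 : (σ j).val ≠ 0 := by
        intro h0
        have : σ j = σ K := by
          rw [hKσ]; exact Fin.val_injective h0
        exact (neval K j hj) this.symm
      omega
    have hKmono := hmono K hKmin
    have hmaxblock : ∀ x : Fin n, P1 < x → x < K → ∀ j, x < j → σ j < σ x := by
      intro x hx1 hx2 j hj
      rcases hnm x (by intro he; rw [he] at hx1; exact absurd hPP1 (asymm hx1)) with hh | hh
      · exact hh j hj
      · exact absurd (hh K hx2) (by rw [Fin.lt_def, hKv]; omega)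
    have hmid : ∀ i : Fin n, P1 < i → i < K → (σ i).val = n - 1 - i.val := by
      intro i hi1 hi2
      have hPi : P < i := hPP1.trans hi1
      have hiP : σ i < σ P := by
        by_contra hc
        have h2 : σ P < σ i := lt_of_le_of_ne (not_lt.1 hc) (neval P i hPi)
        exact hav ⟨P, P1, i, hPP1, hi1, h2, hmax i hi1⟩
      apply val_eq_of_gtset σ i i
      intro x
      constructor
      · intro hx
        by_contra hc
        rcases eq_or_lt_of_le (not_lt.1 hc) with he | hlt
        · exact lt_irrefl _ (he ▸ hx)
        · exact absurd (hmaxblock i hi1 hi2 x hlt) (asymm hx)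
      · intro hx
        rcases lt_trichotomy x.val P.val with hd | hd | hd
        · exact hpre x (Fin.lt_def.2 hd) i hx
        · rw [Fin.val_injective hd]; exact hiP
        · rcases eq_or_lt_of_le (show P1.val ≤ x.val by omega) with hd2 | hd2
          · rw [← Fin.val_injective hd2]; exact hmax i hi1
          · exact hmaxblock x (Fin.lt_def.2 hd2) (hx.trans hi2) i hx
    have hend : ∀ i : Fin n, K ≤ i → (σ i).val = i.val - K.val := by
      intro i hKi
      rcases eq_or_lt_of_le hKi with he | hlt
      · rw [← he, hKv]; omega
      · have hP1i : P1 < i := by rw [Fin.lt_def]; have := Fin.lt_def.1 hlt; omega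
        have hiff : ∀ x, σ x < σ i ↔ x ∈ Finset.Ico K i := by
          intro x
          rw [Finset.mem_Ico]
          constructor
          · intro hx
            have hxi : x < i := by
              by_contra hcc
              rcases eq_or_lt_of_le (not_lt.1 hcc) with he2 | hlt2
              · exact lt_irrefl _ (he2 ▸ hx)
              · exact absurd (hKmono i x hlt hlt2) (asymm hx)
            refine ⟨?_, hxi⟩
            by_contra hcc
            push_neg at hcc
            rcases lt_trichotomy x.val P.val with hd | hd | hd
            · exact absurd (hpre x (Fin.lt_def.2 hd) i (hcc.trans hlt)) (asymm hx)
            · have hx' : σ P < σ i := Fin.val_injective hd ▸ hx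
              exact hav ⟨P, P1, i, hPP1, hP1i, hx', hmax i hP1i⟩
            · rcases eq_or_lt_of_le (show P1.val ≤ x.val by omega) with hd2 | hd2
              · exact absurd (Fin.val_injective hd2 ▸ hmax i hP1i) (asymm hx)
              · exact absurd (hmaxblock x (Fin.lt_def.2 hd2) hcc i (hcc.trans hlt)) (asymm hx)
          · rintro ⟨h1x, h2x⟩
            rcases eq_or_lt_of_le h1x with he2 | hlt2
            · rw [← he2]; exact hKmin i hlt
            · exact hKmono x i hlt2 h2x
        have hg := val_eq_of_ltset σ i _ hiff
        rwa [Fin.card_Ico] at hg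
    refine ⟨K.val - 1, P.val, ⟨by omega, by omega, by omega⟩, ?_⟩
    apply Equiv.ext
    intro i
    apply Fin.val_injective
    refine (Phi_val _ i).trans ?_
    have hin := i.isLt
    rcases lt_trichotomy i.val P.val with hc | hc | hc
    · have hr := hpreval i (Fin.lt_def.2 hc)
      unfold g; split_ifs <;> omega
    · have hie : i = P := Fin.val_injective hc
      rw [hie]
      unfold g; split_ifs <;> omega
    · rcases lt_trichotomy i.val (P.val + 1) with hc2 | hc2 | hc2
      · omega
      · have hie : i = P1 := Fin.val_injective (by omega)
        rw [hie, hP1val]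
        unfold g; split_ifs <;> omega
      · rcases lt_or_ge i.val K.val with hc3 | hc3
        · have hr := hmid i (Fin.lt_def.2 (by omega)) (Fin.lt_def.2 hc3)
          unfold g; split_ifs <;> omega
        · have hr := hend i (Fin.le_def.2 hc3)
          unfold g; split_ifs <;> omega
  -- CASE A : σ is increasing after P
  case inr =>
    have hsuf : ∀ j k : Fin n, P < j → j < k → σ j < σ k := by
      intro j k hPj hjk
      have hj' : P1 ≤ j := by rw [Fin.le_def]; rw [Fin.lt_def] at hPj; omega
      rcases eq_or_lt_of_le hj' with he | hlt
      · rw [← he]; exact hmin k (lt_of_le_of_lt hj' hjk)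
      · exact hmono P1 hmin j k hlt hjk
    have hkey : ∀ i : Fin n, P < i →
        ((σ P < σ i ∧ (σ i).val = i.val - P.val) ∨
         (σ i < σ P ∧ (σ i).val = i.val - P.val - 1)) := by
      intro i hPi
      by_cases hc : σ P < σ i
      · left
        refine ⟨hc, ?_⟩
        have hiff : ∀ x, σ x < σ i ↔ x ∈ Finset.Ico P i := by
          intro x
          rw [Finset.mem_Ico]
          constructor
          · intro hx
            constructor
            · by_contra hcc
              push_neg at hcc
              exact absurd (hpre x hcc i (hcc.trans hPi)) (asymm hx)
            · by_contra hcc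
              push_neg at hcc
              rcases eq_or_lt_of_le hcc with he | hlt
              · exact lt_irrefl _ (he ▸ hx)
              · exact absurd (hsuf i x hPi hlt) (asymm hx)
          · rintro ⟨hPx, hxi⟩
            rcases eq_or_lt_of_le hPx with he | hlt
            · rw [← he]; exact hc
            · exact hsuf x i hlt hxi
        have := val_eq_of_ltset σ i _ hiff
        rwa [Fin.card_Ico] at this
      · right
        have hc' : σ i < σ P := lt_of_le_of_ne (not_lt.1 hc) (neval P i hPi).symm
        refine ⟨hc', ?_⟩
        have hiff : ∀ x, σ x < σ i ↔ x ∈ Finset.Ioo P i := by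
          intro x
          rw [Finset.mem_Ioo]
          constructor
          · intro hx
            constructor
            · by_contra hcc
              push_neg at hcc
              rcases eq_or_lt_of_le hcc with he | hlt
              · exact absurd (he ▸ hx) (asymm hc')
              · exact absurd (hpre x hlt i (hlt.trans hPi)) (asymm hx)
            · by_contra hcc
              push_neg at hcc
              rcases eq_or_lt_of_le hcc with he | hlt
              · exact lt_irrefl _ (he ▸ hx)
              · exact absurd (hsuf i x hPi hlt) (asymm hx)
          · rintro ⟨hPx, hxi⟩
            exact hsuf x i hPx hxi
        have := val_eq_of_ltset σ i _ hiff
        rwa [Fin.card_Ioo] at this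
    have hv1 : 1 ≤ (σ P).val := by omega
    have hv2 : P.val + (σ P).val ≤ n - 2 := by
      rcases hkey A hPA with ⟨h1, h2⟩ | ⟨h1, h2⟩
      · have := A.isLt; have hPA' := Fin.lt_def.1 hPA; omega
      · exact absurd hA (asymm h1)
    refine ⟨P.val, P.val + (σ P).val, ⟨by omega, by omega, by omega⟩, ?_⟩
    apply Equiv.ext
    intro i
    apply Fin.val_injective
    refine (Phi_val _ i).trans ?_
    have hin := i.isLt
    rcases lt_trichotomy i.val P.val with hc | hc | hc
    · have hr := hpreval i (Fin.lt_def.2 hc)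
      unfold g; split_ifs <;> omega
    · have : i = P := Fin.val_injective hc
      subst this
      unfold g; split_ifs <;> omega
    · rcases hkey i (Fin.lt_def.2 hc) with ⟨h1, h2⟩ | ⟨h1, h2⟩ <;>
        [skip; skip] <;> (have h1v := Fin.lt_def.1 h1; unfold g; split_ifs <;> omega)

end Stmt15Aux

end Stmt15Aux


theorem stmt15 (n : ℕ) (hn : 3 ≤ n) :
    Nat.card {σ : Equiv.Perm (Fin n) // avoids132 σ ∧ mmp 1 0 0 1 σ = 1} =
      (n - 1) * (n - 2) := by
  classical
  open Stmt15Aux in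
  rw [Nat.card_eq_fintype_card, Fintype.card_subtype]
  have hok : ∀ pq : ℕ × ℕ, pq ∈ (Finset.range (n-1)).offDiag → Stmt15Aux.Ok n pq.1 pq.2 := by
    intro pq h
    rw [Finset.mem_offDiag] at h
    exact ⟨Finset.mem_range.1 h.1, Finset.mem_range.1 h.2.1, h.2.2⟩
  have hcard : ((Finset.range (n-1)).offDiag).card =
      (Finset.univ.filter fun σ : Equiv.Perm (Fin n) =>
        avoids132 σ ∧ mmp 1 0 0 1 σ = 1).card := by
    apply Finset.card_bij (fun pq hpq => Stmt15Aux.Phi (hok pq hpq))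
    · intro a ha
      simp only [Finset.mem_filter, Finset.mem_univ, true_and]
      refine ⟨Stmt15Aux.Phi_avoids _, (Stmt15Aux.mmp_one_iff _).2 ?_⟩
      rcases lt_or_gt_of_ne (hok a ha).2.2 with hh | hh
      · exact Stmt15Aux.Phi_mat_A _ hh
      · exact Stmt15Aux.Phi_mat_C _ hh
    · intro a ha b hb heq
      obtain ⟨h1, h2⟩ := Stmt15Aux.Phi_param_inj (hok a ha) (hok b hb) heq
      exact Prod.ext h1 h2
    · intro σ hσ
      rw [Finset.mem_filter] at hσ
      obtain ⟨-, hav, hm⟩ := hσ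
      obtain ⟨p, q, hOk, hPhi⟩ :=
        Stmt15Aux.surj_param hn σ hav ((Stmt15Aux.mmp_one_iff σ).1 hm)
      refine ⟨(p, q), ?_, hPhi⟩
      rw [Finset.mem_offDiag]
      exact ⟨Finset.mem_range.2 hOk.1, Finset.mem_range.2 hOk.2.1, hOk.2.2⟩
  rw [← hcard, Finset.offDiag_card, Finset.card_range]
  obtain ⟨m, rfl⟩ : ∃ m, n = m + 3 := ⟨n - 3, by omega⟩
  have e1 : m + 3 - 1 = m + 2 := by omega
  have e2 : m + 3 - 2 = m + 1 := by omega
  rw [e1, e2]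
  have e3 : (m+2)*(m+2) = (m+2)*(m+1) + (m+2) := by ring
  omega
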